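/- Let μ be a probability measure on ℝ such that for some constant C, |∫_ℝ φ'(r) μ(dr)| ≤ C‖φ‖_∞ for all C¹ bounded functions φ with bounded derivative. Then μ is absolutely continuous with respect to Lebesgue measure. -/

import Mathlib

open MeasureTheory Filter Real Set Metric

lemma interval_bound (μ : Measure ℝ) [IsProbabilityMeasure μ] (C : ℝ) (hC : 0 < C)
    (h : ∀ φ : ℝ → ℝ, ContDiff ℝ 1 φ → (∃ M, ∀ x, |φ x| ≤ M) →
      (∃ M, ∀ x, |deriv φ x| ≤ M) →
      |∫ x, deriv φ x ∂μ| ≤ C * ⨆ x, |φ x|)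
    (a b : ℝ) (hab : a ≤ b) : μ (Set.Icc a b) ≤ ENNReal.ofReal (C * (b - a)) := by
  rw [ENNReal.le_ofReal_iff_toReal_le (measure_ne_top μ _) (mul_nonneg hC.le (by linarith))]
  refine le_of_forall_pos_le_add fun ε εpos => ?_
  set δ : ℝ := ε / (2 * C) with hδ
  have hδpos : 0 < δ := by positivity
  set c : ℝ := (a + b) / 2 with hc
  set f : ContDiffBump c := ⟨(b - a) / 2 + δ / 2, (b - a) / 2 + δ, by linarith, by linarith⟩
    with hf
  have hrOut : f.rOut = (b - a) / 2 + δ := rfl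
  have hrIn : f.rIn = (b - a) / 2 + δ / 2 := rfl
  set φ : ℝ → ℝ := fun u => ∫ t in (c - f.rOut)..u, (f : ℝ → ℝ) t with hφ
  have hderiv : ∀ x, deriv φ x = f x := fun x =>
    Continuous.deriv_integral f f.continuous _ x
  have hdiff : Differentiable ℝ φ := fun x =>
    (f.continuous.integral_hasStrictDerivAt _ x).hasDerivAt.differentiableAt
  have hcd : ContDiff ℝ 1 φ := contDiff_one_iff_deriv.2 ⟨hdiff, by
    rw [funext hderiv]; exact f.continuous⟩
  have hzero : ∀ x ≤ c - f.rOut, φ x = 0 := by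
    intro x hx
    have he : ∀ t ∈ Set.uIcc (c - f.rOut) x, (f : ℝ → ℝ) t = 0 := by
      intro t ht
      apply f.zero_of_le_dist
      rw [Set.uIcc_of_ge hx] at ht
      rw [Real.dist_eq, abs_sub_comm, abs_of_nonneg (by linarith [ht.2, f.rOut_pos])]
      linarith [ht.2]
    calc φ x = ∫ t in (c - f.rOut)..x, (0:ℝ) :=
          intervalIntegral.integral_congr he
      _ = 0 := by simp
  have hφ0 : ∀ x, 0 ≤ φ x := by
    intro x
    rcases le_or_gt (c - f.rOut) x with hx | hx
    · exact intervalIntegral.integral_nonneg hx fun t _ => f.nonneg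
    · rw [hzero x hx.le]
  have hφub : ∀ x, φ x ≤ 2 * f.rOut := by
    intro x
    rcases le_or_gt (c - f.rOut) x with hx | hx
    · have h1 : φ x = ∫ t in Set.Ioc (c - f.rOut) x, (f : ℝ → ℝ) t := by
        rw [hφ]; exact intervalIntegral.integral_of_le hx
      have h2 : φ x ≤ ∫ t, (f : ℝ → ℝ) t := by
        rw [h1]
        exact setIntegral_le_integral f.integrable (Filter.Eventually.of_forall fun t => f.nonneg)
      refine h2.trans ((f.integral_le_measure_closedBall volume).trans ?_)
      rw [Measure.real, Real.volume_closedBall, ENNReal.toReal_ofReal (by linarith [f.rOut_pos])]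
    · rw [hzero x hx.le]; linarith [f.rOut_pos]
  have hsup : (⨆ x, |φ x|) ≤ 2 * f.rOut :=
    ciSup_le fun x => by rw [abs_of_nonneg (hφ0 x)]; exact hφub x
  have hbound := h φ hcd ⟨2 * f.rOut, fun x => by
      rw [abs_of_nonneg (hφ0 x)]; exact hφub x⟩
    ⟨1, fun x => by rw [hderiv x, abs_of_nonneg f.nonneg]; exact f.le_one⟩
  have hint : ∫ x, deriv φ x ∂μ = ∫ x, (f : ℝ → ℝ) x ∂μ := by
    exact integral_congr_ae (Filter.Eventually.of_forall fun x => hderiv x)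
  have hlow : (μ (Set.Icc a b)).toReal ≤ ∫ x, (f : ℝ → ℝ) x ∂μ := by
    refine le_trans ?_ (f.measure_closedBall_le_integral μ)
    apply ENNReal.toReal_mono (measure_ne_top μ _)
    apply measure_mono
    intro t ht
    rw [Metric.mem_closedBall, Real.dist_eq, abs_le, hrIn, hc]
    obtain ⟨h1, h2⟩ := ht
    constructor <;> linarith
  have hfin : ∫ x, (f : ℝ → ℝ) x ∂μ ≤ C * (2 * f.rOut) := by
    calc ∫ x, (f : ℝ → ℝ) x ∂μ ≤ |∫ x, deriv φ x ∂μ| := by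
          rw [hint]; exact le_abs_self _
      _ ≤ C * ⨆ x, |φ x| := hbound
      _ ≤ C * (2 * f.rOut) := by
          apply mul_le_mul_of_nonneg_left hsup hC.le
  have : (μ (Set.Icc a b)).toReal ≤ C * (2 * f.rOut) := hlow.trans hfin
  have hδε : 2 * C * δ = ε := by
    rw [hδ]; field_simp
  have h2r : C * (2 * f.rOut) = C * (b - a) + ε := by
    rw [hrOut]; linear_combination hδε
  linarith

theorem absolutelyContinuous_of_integration_by_parts_bound
    (μ : Measure ℝ) [IsProbabilityMeasure μ] (C : ℝ) (hC : 0 < C)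
    (h : ∀ φ : ℝ → ℝ, ContDiff ℝ 1 φ → (∃ M, ∀ x, |φ x| ≤ M) →
      (∃ M, ∀ x, |deriv φ x| ≤ M) →
      |∫ x, deriv φ x ∂μ| ≤ C * ⨆ x, |φ x|) :
    μ ≪ volume := by
  set c : NNReal := ⟨C, hC.le⟩ with hcdef
  set ν : Measure ℝ := c • volume with hν
  have key : ∀ s : Set ℝ, μ s ≤ ν s := by
    intro s
    refine (Besicovitch.vitaliFamily μ).measure_le_of_frequently_le ν
      Measure.AbsolutelyContinuous.rfl s fun x _ => ?_
    apply (Besicovitch.tendsto_filterAt μ x).frequently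
    apply Filter.Eventually.frequently
    filter_upwards [self_mem_nhdsWithin] with r (hr : 0 < r)
    have h1 : μ (Metric.closedBall x r) ≤ ENNReal.ofReal (C * ((x + r) - (x - r))) := by
      rw [Real.closedBall_eq_Icc]
      exact interval_bound μ C hC h _ _ (by linarith)
    refine h1.trans ?_
    rw [hν, Measure.smul_apply, Real.volume_closedBall, ENNReal.smul_def]
    have h2 : (x + r) - (x - r) = 2 * r := by ring
    rw [h2, ENNReal.ofReal_mul hC.le, ENNReal.ofReal, Real.toNNReal_of_nonneg hC.le,
      smul_eq_mul]
    exact le_rfl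
  refine Measure.AbsolutelyContinuous.mk fun s hs h0 => ?_
  refine le_antisymm ?_ zero_le
  calc μ s ≤ ν s := key s
    _ = c • volume s := by rw [hν, Measure.smul_apply]
    _ = 0 := by rw [h0]; simp
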